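/- Suppose char k = 2 and C = Spec k[x,y]/(y² − x³). Then the derivation d/dy is a regular vector field on C (i.e., a k-linear derivation of k[x,y]/(y²−x³)), but its pullback to the normalization k[t] (via x ↦ t², y ↦ t³) is the rational vector field (1/(3t²))·d/dt, which has a pole of order 2 at t = 0. -/
import Mathlib

set_option synthInstance.maxHeartbeats 1000000
set_option maxHeartbeats 1000000

/-- The ideal `(y² − x³) ⊂ k[x,y]` defining the cuspidal cubic. -/
noncomputable def cuspIdeal (k : Type) [Field k] : Ideal (MvPolynomial (Fin 2) k) :=
  Ideal.span {(MvPolynomial.X 1 : MvPolynomial (Fin 2) k) ^ 2 - MvPolynomial.X 0 ^ 3}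

/-- Suppose `char k = 2` and `C = Spec k[x,y]/(y²−x³)`.  Then `d/dy` is a
regular vector field on `C` (a `k`-linear derivation of `k[x,y]/(y²−x³)` with
`x ↦ 0`, `y ↦ 1`), but its pullback along the normalization
`ν : k[x,y]/(y²−x³) → k[t]`, `x ↦ t²`, `y ↦ t³`, is the rational vector field
`(1/(3t²)) d/dt`: for every `f` one has `(ν f)' = t² · ν(d/dy f)` (and
`3 = 1` in characteristic `2`), so the pullback has a pole of order 2 at
`t = 0`. -/
theorem stmt10 (k : Type) [Field k] (hchar : CharP k 2)
    (ν : (MvPolynomial (Fin 2) k ⧸ cuspIdeal k) →ₐ[k] Polynomial k)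
    (hνx : ν (Ideal.Quotient.mk (cuspIdeal k) (MvPolynomial.X 0)) =
      Polynomial.X ^ 2)
    (hνy : ν (Ideal.Quotient.mk (cuspIdeal k) (MvPolynomial.X 1)) =
      Polynomial.X ^ 3) :
    ∃ D : Derivation k (MvPolynomial (Fin 2) k ⧸ cuspIdeal k)
        (MvPolynomial (Fin 2) k ⧸ cuspIdeal k),
      D (Ideal.Quotient.mk (cuspIdeal k) (MvPolynomial.X 0)) = 0 ∧
      D (Ideal.Quotient.mk (cuspIdeal k) (MvPolynomial.X 1)) = 1 ∧
      ∀ f : MvPolynomial (Fin 2) k ⧸ cuspIdeal k,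
        Polynomial.derivative (ν f) = Polynomial.X ^ 2 * ν (D f) := by
  classical
  have h2k : (2 : k) = 0 := by
    have := hchar.cast_eq_zero
    exact_mod_cast this
  -- 2 = 0 in MvPolynomial and Polynomial
  have h2m : (2 : MvPolynomial (Fin 2) k) = 0 := by
    have : (2 : MvPolynomial (Fin 2) k) = MvPolynomial.C (2 : k) := by
      simp [map_ofNat]
    rw [this, h2k, map_zero]
  have h2p : (2 : Polynomial k) = 0 := by
    have : (2 : Polynomial k) = Polynomial.C (2 : k) := by
      simp [map_ofNat]
    rw [this, h2k, map_zero]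
  set I := cuspIdeal k with hI
  set g : MvPolynomial (Fin 2) k := MvPolynomial.X 1 ^ 2 - MvPolynomial.X 0 ^ 3 with hg
  have hpg : MvPolynomial.pderiv 1 g = 0 := by
    rw [hg]
    rw [map_sub]
    rw [Derivation.leibniz_pow, Derivation.leibniz_pow]
    simp only [MvPolynomial.pderiv_X, Pi.single_eq_same,
      Pi.single_eq_of_ne (by decide : (0 : Fin 2) ≠ 1), smul_eq_mul, nsmul_eq_mul]
    push_cast
    rw [h2m]
    ring
  have hsurj : Function.Surjective (Ideal.Quotient.mkₐ k I) :=
    Ideal.Quotient.mkₐ_surjective k I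
  have hd : ∀ x : MvPolynomial (Fin 2) k,
      Ideal.Quotient.mkₐ k I x = 0 →
      Ideal.Quotient.mkₐ k I (MvPolynomial.pderiv 1 x) = 0 := by
    intro x hx
    have hx' : x ∈ I := by
      simpa [Ideal.Quotient.mkₐ_eq_mk, Ideal.Quotient.eq_zero_iff_mem] using hx
    rw [hI, cuspIdeal, Ideal.mem_span_singleton] at hx'
    obtain ⟨a, rfl⟩ := hx'
    rw [show (MvPolynomial.X 1 ^ 2 - MvPolynomial.X 0 ^ 3 : MvPolynomial (Fin 2) k) = g from rfl]
    have hgz : Ideal.Quotient.mk I g = 0 := by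
      rw [Ideal.Quotient.eq_zero_iff_mem, hI, cuspIdeal]
      exact Ideal.subset_span rfl
    rw [Derivation.leibniz, hpg]
    simp only [smul_eq_mul, mul_zero, zero_add, add_zero, Ideal.Quotient.mkₐ_eq_mk, map_mul,
      map_add, hgz, zero_mul, map_zero]
  let D : Derivation k (MvPolynomial (Fin 2) k ⧸ I) (MvPolynomial (Fin 2) k ⧸ I) :=
    Derivation.liftOfSurjective hsurj hd
  have hDmk : ∀ p : MvPolynomial (Fin 2) k,
      D (Ideal.Quotient.mk I p) = Ideal.Quotient.mk I (MvPolynomial.pderiv 1 p) := by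
    intro p
    exact Derivation.liftOfSurjective_apply hsurj hd p
  refine ⟨D, ?_, ?_, ?_⟩
  · rw [hDmk]
    simp [MvPolynomial.pderiv_X, Pi.single_eq_of_ne (by decide : (0 : Fin 2) ≠ 1)]
  · rw [hDmk]
    simp [MvPolynomial.pderiv_X]
  · intro f
    obtain ⟨p, rfl⟩ := Ideal.Quotient.mk_surjective (I := I) f
    rw [hDmk]
    induction p using MvPolynomial.induction_on with
    | C a =>
        have : (Ideal.Quotient.mk I) (MvPolynomial.C a) = algebraMap k _ a := rfl
        rw [this, AlgHom.commutes]
        simp [MvPolynomial.pderiv_C]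
    | add p q hp hq =>
        simp only [map_add] at *
        rw [hp, hq]; ring
    | mul_X p i hp =>
        fin_cases i
        · -- i = 0 : x, ν x = X^2
          simp only [Fin.zero_eta]
          rw [map_mul, map_mul, Polynomial.derivative_mul, hνx]
          have : MvPolynomial.pderiv 1 (p * MvPolynomial.X 0)
              = MvPolynomial.pderiv 1 p * MvPolynomial.X 0 := by
            rw [MvPolynomial.pderiv_mul, MvPolynomial.pderiv_X,
              Pi.single_eq_of_ne (by decide : (0 : Fin 2) ≠ 1)]
            ring
          rw [this]
          simp only [map_mul]
          rw [hνx]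
          have hX2 : Polynomial.derivative (Polynomial.X ^ 2 : Polynomial k) = 0 := by
            rw [Polynomial.derivative_X_pow]
            push_cast
            rw [show (2 : k) = 0 from h2k]
            simp
          rw [hX2, hp]
          ring
        · -- i = 1 : y, ν y = X^3
          simp only [Fin.mk_one]
          rw [map_mul, map_mul, Polynomial.derivative_mul, hνy]
          have : MvPolynomial.pderiv 1 (p * MvPolynomial.X 1)
              = MvPolynomial.pderiv 1 p * MvPolynomial.X 1 + p := by
            rw [MvPolynomial.pderiv_mul, MvPolynomial.pderiv_X, Pi.single_eq_same]
            ring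
          rw [this]
          simp only [map_add, map_mul]
          rw [hνy]
          have hX3 : Polynomial.derivative (Polynomial.X ^ 3 : Polynomial k)
              = Polynomial.X ^ 2 := by
            rw [Polynomial.derivative_X_pow]
            push_cast
            rw [show (3 : k) = 1 from by
              rw [show (3 : k) = 2 + 1 from by norm_num, h2k]; ring]
            simp
          rw [hX3, hp]
          ring
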